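/- If M is an NFA with m states and N is an NFA with n states, then the language L(M) ←a-sdi L(N) is accepted by some NFA with at most mn + 2m states. -/

import Mathlib

/-- Site-directed insertion (SDI) of string `y` into string `x`. -/
def sdiStr {α : Type} (x y : List α) : Set (List α) :=
  { w | ∃ x₁ u z v x₂ : List α,
      x = x₁ ++ u ++ v ++ x₂ ∧ y = u ++ z ++ v ∧ u ≠ [] ∧ v ≠ [] ∧
      w = x₁ ++ u ++ z ++ v ++ x₂ }

/-- Site-directed insertion extended to languages. -/
def sdiLang {α : Type} (L₁ L₂ : Set (List α)) : Set (List α) :=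
  { w | ∃ x ∈ L₁, ∃ y ∈ L₂, w ∈ sdiStr x y }

/-- Alphabetic site-directed insertion of string `y` into string `x`. -/
def asdiStr {α : Type} (x y : List α) : Set (List α) :=
  { w | ∃ (x₁ x₂ z : List α) (a b : α),
      x = x₁ ++ [a] ++ [b] ++ x₂ ∧ y = [a] ++ z ++ [b] ∧
      w = x₁ ++ [a] ++ z ++ [b] ++ x₂ }

/-- Alphabetic site-directed insertion extended to languages. -/
def asdiLang {α : Type} (L₁ L₂ : Set (List α)) : Set (List α) :=
  { w | ∃ x ∈ L₁, ∃ y ∈ L₂, w ∈ asdiStr x y }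

/-- Maximal site-directed insertion of string `y` into string `x`. -/
def maxSdiStr {α : Type} (x y : List α) : Set (List α) :=
  { w | ∃ x₁ u z v x₂ : List α,
      x = x₁ ++ u ++ v ++ x₂ ∧ y = u ++ z ++ v ∧ u ≠ [] ∧ v ≠ [] ∧
      w = x₁ ++ u ++ z ++ v ++ x₂ ∧
      ¬ ∃ x₁' x₂' z' : List α, x₁' <:+ x₁ ∧ x₂' <+: x₂ ∧
          x₁' ++ x₂' ≠ [] ∧ y = x₁' ++ u ++ z' ++ v ++ x₂' }

/-- Maximal site-directed insertion extended to languages. -/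
def maxSdiLang {α : Type} (L₁ L₂ : Set (List α)) : Set (List α) :=
  { w | ∃ x ∈ L₁, ∃ y ∈ L₂, w ∈ maxSdiStr x y }

/-- Minimal site-directed insertion of string `y` into string `x`:
the words `u` and `v` of the matched outfix must be unbordered. -/
def minSdiStr {α : Type} (x y : List α) : Set (List α) :=
  { w | ∃ x₁ u z v x₂ : List α,
      x = x₁ ++ u ++ v ++ x₂ ∧ y = u ++ z ++ v ∧ u ≠ [] ∧ v ≠ [] ∧
      w = x₁ ++ u ++ z ++ v ++ x₂ ∧
      (∀ s : List α, s <:+ u → s ≠ [] → s ≠ u → ¬ s <+: u) ∧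
      (∀ p : List α, p <+: v → p ≠ [] → p ≠ v → ¬ p <:+ v) }

/-- Minimal site-directed insertion extended to languages. -/
def minSdiLang {α : Type} (L₁ L₂ : Set (List α)) : Set (List α) :=
  { w | ∃ x ∈ L₁, ∃ y ∈ L₂, w ∈ minSdiStr x y }


namespace AsdiNFA

variable {α σM σN : Type} (M : NFA α σM) (N : NFA α σN)

/-- The a-SDI construction NFA on states `σM ⊕ (σM × σN) ⊕ σM`. -/
def C : NFA α (σM ⊕ (σM × σN) ⊕ σM) where
  step := fun st c =>
    match st with
    | .inl p => {t | (∃ q ∈ M.step p c, t = .inl q) ∨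
        (∃ q ∈ M.step p c, ∃ s ∈ N.stepSet N.start c, t = .inr (.inl (q, s)))}
    | .inr (.inl (q, s)) => {t | (∃ s' ∈ N.step s c, t = .inr (.inl (q, s'))) ∨
        (∃ r ∈ M.step q c, (∃ t' ∈ N.step s c, t' ∈ N.accept) ∧ t = .inr (.inr r))}
    | .inr (.inr r) => {t | ∃ r' ∈ M.step r c, t = .inr (.inr r')}
  start := Sum.inl '' M.start
  accept := {t | ∃ r ∈ M.accept, t = .inr (.inr r)}

lemma L1 (w : List α) (q : σM) :
    Sum.inl q ∈ (C M N).eval w ↔ q ∈ M.eval w := by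
  induction w using List.reverseRecOn generalizing q with
  | nil =>
    simp [C, NFA.eval_nil]
  | append_singleton w c ih =>
    rw [NFA.eval_append_singleton, NFA.mem_stepSet,
      NFA.eval_append_singleton, NFA.mem_stepSet]
    constructor
    · rintro ⟨st, hst, hstep⟩
      rcases st with p | ⟨⟨q', s⟩ | r⟩
      · rcases hstep with ⟨q', hq', he⟩ | ⟨q', _, s, _, he⟩
        · obtain rfl : q = q' := by simpa using he
          exact ⟨p, (ih p).mp hst, hq'⟩
        · exact absurd he (by simp)
      · rcases hstep with ⟨s', _, he⟩ | ⟨r, _, _, he⟩ <;> exact absurd he (by simp)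
      · rcases hstep with ⟨r', _, he⟩; exact absurd he (by simp)
    · rintro ⟨p, hp, hq⟩
      exact ⟨Sum.inl p, (ih p).mpr hp, Or.inl ⟨q, hq, rfl⟩⟩

lemma L2 (w : List α) (q : σM) (s : σN) :
    Sum.inr (Sum.inl (q, s)) ∈ (C M N).eval w ↔
      ∃ w₁ a z, w = w₁ ++ a :: z ∧ q ∈ M.eval (w₁ ++ [a]) ∧
        s ∈ N.evalFrom (N.stepSet N.start a) z := by
  constructor
  · induction w using List.reverseRecOn generalizing q s with
    | nil => intro h; simp [C] at h
    | append_singleton w c ih =>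
      intro h
      rw [NFA.eval_append_singleton, NFA.mem_stepSet] at h
      obtain ⟨st, hst, hstep⟩ := h
      rcases st with p | ⟨⟨q', s'⟩ | r⟩
      · rcases hstep with ⟨q', _, he⟩ | ⟨q', hq', s', hs', he⟩
        · exact absurd he (by simp)
        · obtain ⟨rfl, rfl⟩ : q = q' ∧ s = s' := by simpa using he
          refine ⟨w, c, [], by simp, ?_, by simpa using hs'⟩
          rw [NFA.eval_append_singleton, NFA.mem_stepSet]
          exact ⟨p, (L1 M N w p).mp hst, hq'⟩
      · rcases hstep with ⟨s₂, hs₂, he⟩ | ⟨r, _, _, he⟩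
        · obtain ⟨rfl, rfl⟩ : q = q' ∧ s = s₂ := by simpa using he
          obtain ⟨w₁, a, z, rfl, hq, hs2⟩ := ih q s' hst
          refine ⟨w₁, a, z ++ [c], by simp, hq, ?_⟩
          rw [NFA.evalFrom_append, NFA.evalFrom_singleton, NFA.mem_stepSet]
          exact ⟨s', hs2, hs₂⟩
        · exact absurd he (by simp)
      · rcases hstep with ⟨r', _, he⟩; exact absurd he (by simp)
  · rintro ⟨w₁, a, z, rfl, hq, hs⟩
    induction z using List.reverseRecOn generalizing s with
    | nil =>
      rw [show w₁ ++ a :: ([] : List α) = w₁ ++ [a] by simp,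
        NFA.eval_append_singleton, NFA.mem_stepSet]
      rw [NFA.eval_append_singleton, NFA.mem_stepSet] at hq
      obtain ⟨p, hp, hq⟩ := hq
      exact ⟨Sum.inl p, (L1 M N w₁ p).mpr hp,
        Or.inr ⟨q, hq, s, by simpa using hs, rfl⟩⟩
    | append_singleton z c ih =>
      rw [NFA.evalFrom_append, NFA.evalFrom_singleton, NFA.mem_stepSet] at hs
      obtain ⟨s₀, hs₀, hs⟩ := hs
      rw [show w₁ ++ a :: (z ++ [c]) = (w₁ ++ a :: z) ++ [c] by simp,
        NFA.eval_append_singleton, NFA.mem_stepSet]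
      exact ⟨Sum.inr (Sum.inl (q, s₀)), ih s₀ hs₀, Or.inl ⟨s, hs, rfl⟩⟩

lemma L3 (w : List α) (r : σM) :
    Sum.inr (Sum.inr r) ∈ (C M N).eval w ↔
      ∃ w₁ a z b w₂, w = w₁ ++ a :: (z ++ b :: w₂) ∧
        (a :: (z ++ [b])) ∈ N.accepts ∧
        r ∈ M.evalFrom (M.eval ((w₁ ++ [a]) ++ [b])) w₂ := by
  constructor
  · induction w using List.reverseRecOn generalizing r with
    | nil => intro h; simp [C] at h
    | append_singleton w c ih =>
      intro h
      rw [NFA.eval_append_singleton, NFA.mem_stepSet] at h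
      obtain ⟨st, hst, hstep⟩ := h
      rcases st with p | ⟨⟨q, s⟩ | r₀⟩
      · rcases hstep with ⟨q, _, he⟩ | ⟨q, _, s, _, he⟩ <;> exact absurd he (by simp)
      · rcases hstep with ⟨s', _, he⟩ | ⟨r', hr', ⟨t', ht', htacc⟩, he⟩
        · exact absurd he (by simp)
        · obtain rfl : r = r' := by simpa using he
          obtain ⟨w₁, a, z, rfl, hq, hs⟩ := (L2 M N w q s).mp hst
          refine ⟨w₁, a, z, c, [], by simp, ?_, ?_⟩
          · refine ⟨t', htacc, ?_⟩
            rw [show (a :: (z ++ [c])) = (a :: z) ++ [c] by simp,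
              NFA.eval_append_singleton, NFA.mem_stepSet]
            exact ⟨s, by simpa [NFA.eval, NFA.evalFrom] using hs, ht'⟩
          · rw [NFA.evalFrom_nil, NFA.eval_append_singleton, NFA.mem_stepSet]
            exact ⟨q, hq, hr'⟩
      · rcases hstep with ⟨r', hr', he⟩
        obtain rfl : r = r' := by simpa using he
        obtain ⟨w₁, a, z, b, w₂, rfl, hacc, hr₀⟩ := ih r₀ hst
        refine ⟨w₁, a, z, b, w₂ ++ [c], by simp, hacc, ?_⟩
        rw [NFA.evalFrom_append, NFA.evalFrom_singleton, NFA.mem_stepSet]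
        exact ⟨r₀, hr₀, hr'⟩
  · rintro ⟨w₁, a, z, b, w₂, rfl, hacc, hr⟩
    induction w₂ using List.reverseRecOn generalizing r with
    | nil =>
      rw [NFA.evalFrom_nil, NFA.eval_append_singleton, NFA.mem_stepSet] at hr
      obtain ⟨q, hq, hr⟩ := hr
      obtain ⟨t', htacc, ht'⟩ := hacc
      rw [show (a :: (z ++ [b])) = (a :: z) ++ [b] by simp,
        NFA.eval_append_singleton, NFA.mem_stepSet] at ht'
      obtain ⟨s, hs, ht'⟩ := ht'
      have hmem : Sum.inr (Sum.inl (q, s)) ∈ (C M N).eval (w₁ ++ a :: z) :=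
        (L2 M N _ q s).mpr ⟨w₁, a, z, rfl, hq,
          by simpa [NFA.eval, NFA.evalFrom] using hs⟩
      rw [show w₁ ++ a :: (z ++ b :: []) = (w₁ ++ a :: z) ++ [b] by simp,
        NFA.eval_append_singleton, NFA.mem_stepSet]
      exact ⟨_, hmem, Or.inr ⟨r, hr, ⟨t', ht', htacc⟩, rfl⟩⟩
    | append_singleton w₂ c ih =>
      rw [NFA.evalFrom_append, NFA.evalFrom_singleton, NFA.mem_stepSet] at hr
      obtain ⟨r₀, hr₀, hr⟩ := hr
      rw [show w₁ ++ a :: (z ++ b :: (w₂ ++ [c])) = (w₁ ++ a :: (z ++ b :: w₂)) ++ [c] by simp,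
        NFA.eval_append_singleton, NFA.mem_stepSet]
      exact ⟨_, ih r₀ hr₀, ⟨r, hr, rfl⟩⟩

lemma eval_append {α σ : Type} (M : NFA α σ) (x y : List α) :
    M.eval (x ++ y) = M.evalFrom (M.eval x) y := by
  simp [NFA.eval, NFA.evalFrom, List.foldl_append]

end AsdiNFA

/-- If `M` is an NFA with `m` states and `N` an NFA with `n` states, then
`L(M) ←a-sdi L(N)` is accepted by an NFA with at most `mn + 2m` states. -/
theorem asdi_nfa_upper_bound {α : Type} {σM σN : Type} [Fintype σM] [Fintype σN]
    {m n : ℕ} (M : NFA α σM) (N : NFA α σN)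
    (hm : Fintype.card σM = m) (hn : Fintype.card σN = n) :
    ∃ (σ : Type) (inst : Fintype σ) (C : NFA α σ),
      @Fintype.card σ inst ≤ m * n + 2 * m ∧
      C.accepts = asdiLang M.accepts N.accepts := by
  refine ⟨σM ⊕ (σM × σN) ⊕ σM, inferInstance, AsdiNFA.C M N, ?_, ?_⟩
  · simp only [Fintype.card_sum, Fintype.card_prod, hm, hn]
    omega
  · ext w
    rw [NFA.mem_accepts]
    constructor
    · rintro ⟨t, ht, hev⟩
      obtain ⟨r, hracc, rfl⟩ := ht
      obtain ⟨w₁, a, z, b, w₂, rfl, haccN, hr⟩ := (AsdiNFA.L3 M N w r).mp hev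
      rw [← AsdiNFA.eval_append] at hr
      exact ⟨w₁ ++ [a] ++ [b] ++ w₂, ⟨r, hracc, hr⟩,
        [a] ++ z ++ [b], by exact haccN,
        w₁, w₂, z, a, b, rfl, rfl, by simp⟩
    · rintro ⟨x, hx, y, hy, x₁, x₂, z, a, b, rfl, rfl, rfl⟩
      obtain ⟨r, hracc, hr⟩ := hx
      refine ⟨Sum.inr (Sum.inr r), ⟨r, hracc, rfl⟩, ?_⟩
      rw [AsdiNFA.eval_append] at hr
      exact (AsdiNFA.L3 M N _ r).mpr
        ⟨x₁, a, z, b, x₂, by simp, by exact hy, hr⟩
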